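/- arXiv:1801.05187 — 4 statements merged into one kernel-verified Lean document; each statement's English description precedes it below -/
import Mathlib

section
/- Every amenable topological group is unitarisable: every uniformly bounded continuous representation of an amenable topological group on a Hilbert space is conjugate (by a bounded invertible operator) to a unitary representation. -/
open scoped BoundedContinuousFunction

/-- A topological group is amenable if there is a left-invariant mean on the space of
bounded continuous real-valued functions on it. -/
def IsAmenableGroup (G : Type*) [Group G] [TopologicalSpace G] [IsTopologicalGroup G] : Prop :=
  ∃ m : (G →ᵇ ℝ) →ₗ[ℝ] ℝ,
    m (BoundedContinuousFunction.const G (1 : ℝ)) = 1 ∧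
    (∀ f : G →ᵇ ℝ, 0 ≤ f → 0 ≤ m f) ∧
    ∀ (g : G) (f : G →ᵇ ℝ),
      m (f.compContinuous ((Homeomorph.mulLeft g : G ≃ₜ G) : C(G, G))) = m f

/-- A topological group `G` is unitarisable if every uniformly bounded strongly continuous
representation of `G` on a complex Hilbert space is conjugate, by a bounded invertible
operator, to a unitary representation. -/
def Unitarisable (G : Type*) [Group G] [TopologicalSpace G] : Prop :=
  ∀ (H : Type) (_ : NormedAddCommGroup H) (_ : InnerProductSpace ℂ H) (_ : CompleteSpace H)
    (π : G →* (H ≃L[ℂ] H)),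
    (∃ C : ℝ, ∀ g : G, ‖((π g : H →L[ℂ] H))‖ ≤ C) →
    (∀ v : H, Continuous fun g : G => π g v) →
    ∃ S : H ≃L[ℂ] H, ∀ (g : G) (v w : H),
      (inner ℂ (S (π g (S.symm v))) (S (π g (S.symm w))) : ℂ) = inner ℂ v w


set_option maxHeartbeats 1000000
set_option synthInstance.maxHeartbeats 400000

open scoped BoundedContinuousFunction
open BoundedContinuousFunction ContinuousLinearMap
open scoped NNReal

noncomputable section SNDfull

noncomputable section SNDaux
namespace SNDaux

variable {G : Type*} [Group G] [TopologicalSpace G] [IsTopologicalGroup G]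

lemma bcf_le_iff {f g : G →ᵇ ℝ} : f ≤ g ↔ ∀ x, f x ≤ g x := Iff.rfl

variable (m : (G →ᵇ ℝ) →ₗ[ℝ] ℝ)

section mean

lemma m_mono (hmpos : ∀ f : G →ᵇ ℝ, 0 ≤ f → 0 ≤ m f) {f g : G →ᵇ ℝ} (h : f ≤ g) : m f ≤ m g := by
  have h0 : (0 : G →ᵇ ℝ) ≤ g - f := by
    rw [bcf_le_iff]; intro x
    simp only [BoundedContinuousFunction.coe_zero, Pi.zero_apply,
      BoundedContinuousFunction.coe_sub, Pi.sub_apply, sub_nonneg]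
    exact (bcf_le_iff.mp h) x
  have := hmpos _ h0
  rw [map_sub] at this
  linarith

lemma m_const (hm1 : m (const G (1 : ℝ)) = 1) (c : ℝ) : m (const G c) = c := by
  have : const G c = c • const G (1 : ℝ) := by ext x; simp
  rw [this, map_smul, hm1, smul_eq_mul, mul_one]

lemma m_le_norm (hm1 : m (const G (1 : ℝ)) = 1) (hmpos : ∀ f : G →ᵇ ℝ, 0 ≤ f → 0 ≤ m f) (f : G →ᵇ ℝ) : m f ≤ ‖f‖ := by
  have h : f ≤ const G ‖f‖ := by
    rw [bcf_le_iff]; intro x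
    exact (le_abs_self _).trans (by simpa [Real.norm_eq_abs] using f.norm_coe_le_norm x)
  calc m f ≤ m (const G ‖f‖) := m_mono m hmpos h
    _ = ‖f‖ := m_const m hm1 _

lemma abs_m_le_norm (hm1 : m (const G (1 : ℝ)) = 1) (hmpos : ∀ f : G →ᵇ ℝ, 0 ≤ f → 0 ≤ m f) (f : G →ᵇ ℝ) : |m f| ≤ ‖f‖ := by
  rw [abs_le]
  constructor
  · have := m_le_norm m hm1 hmpos (-f)
    rw [map_neg, norm_neg] at this
    linarith
  · exact m_le_norm m hm1 hmpos f

end mean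

/-- Real part of a complex bounded continuous function. -/
def reB (f : G →ᵇ ℂ) : G →ᵇ ℝ :=
  ofNormedAddCommGroup (fun g => (f g).re) (Complex.continuous_re.comp f.continuous) ‖f‖
    (fun x => by
      simpa [Real.norm_eq_abs] using
        (Complex.abs_re_le_norm (f x)).trans
          (f.norm_coe_le_norm x))

/-- Imaginary part of a complex bounded continuous function. -/
def imB (f : G →ᵇ ℂ) : G →ᵇ ℝ :=
  ofNormedAddCommGroup (fun g => (f g).im) (Complex.continuous_im.comp f.continuous) ‖f‖
    (fun x => by
      simpa [Real.norm_eq_abs] using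
        (Complex.abs_im_le_norm (f x)).trans
          (f.norm_coe_le_norm x))

@[simp] lemma reB_apply (f : G →ᵇ ℂ) (x : G) : reB f x = (f x).re := rfl
@[simp] lemma imB_apply (f : G →ᵇ ℂ) (x : G) : imB f x = (f x).im := rfl

lemma norm_reB_le (f : G →ᵇ ℂ) : ‖reB f‖ ≤ ‖f‖ :=
  norm_ofNormedAddCommGroup_le _ (norm_nonneg f) _

lemma norm_imB_le (f : G →ᵇ ℂ) : ‖imB f‖ ≤ ‖f‖ :=
  norm_ofNormedAddCommGroup_le _ (norm_nonneg f) _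

/-- The complexification of the mean `m`. -/
def mC (f : G →ᵇ ℂ) : ℂ := (m (reB f) : ℂ) + (m (imB f) : ℂ) * Complex.I

lemma mC_add (f g : G →ᵇ ℂ) : mC m (f + g) = mC m f + mC m g := by
  have h1 : reB (f + g) = reB f + reB g := by ext x; simp
  have h2 : imB (f + g) = imB f + imB g := by ext x; simp
  rw [mC, mC, mC, h1, h2, map_add, map_add]
  push_cast; ring

lemma mC_smul (a : ℂ) (f : G →ᵇ ℂ) : mC m (a • f) = a * mC m f := by
  have h1 : reB (a • f) = a.re • reB f - a.im • imB f := by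
    ext x; simp [Complex.mul_re, smul_eq_mul]
  have h2 : imB (a • f) = a.re • imB f + a.im • reB f := by
    ext x; simp [Complex.mul_im, smul_eq_mul]
  rw [mC, mC, h1, h2, map_sub, map_add, map_smul, map_smul, map_smul, map_smul]
  simp only [smul_eq_mul]
  rw [Complex.ext_iff]
  refine ⟨?_, ?_⟩ <;> simp [Complex.mul_re, Complex.mul_im, Complex.add_re, Complex.add_im]

lemma mC_conj (f g : G →ᵇ ℂ) (h : ∀ x, g x = starRingEnd ℂ (f x)) :
    mC m g = starRingEnd ℂ (mC m f) := by
  have h1 : reB g = reB f := by ext x; simp [h x]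
  have h2 : imB g = -imB f := by ext x; simp [h x]
  rw [mC, mC, h1, h2, map_neg]
  rw [Complex.ext_iff]
  constructor <;> simp

lemma mC_real (f : G →ᵇ ℂ) (h : ∀ x, (f x).im = 0) : mC m f = (m (reB f) : ℂ) := by
  have h2 : imB f = 0 := by ext x; simp [h x]
  rw [mC, h2, map_zero]; simp

lemma norm_mC_le (hm1 : m (const G (1 : ℝ)) = 1) (hmpos : ∀ f : G →ᵇ ℝ, 0 ≤ f → 0 ≤ m f)
    (f : G →ᵇ ℂ) : ‖mC m f‖ ≤ 2 * ‖f‖ := by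
  rw [mC]
  calc ‖(m (reB f) : ℂ) + (m (imB f) : ℂ) * Complex.I‖
      ≤ ‖(m (reB f) : ℂ)‖ + ‖(m (imB f) : ℂ) * Complex.I‖ := norm_add_le _ _
    _ = |m (reB f)| + |m (imB f)| := by
        simp [Complex.norm_real, Real.norm_eq_abs]
    _ ≤ ‖reB f‖ + ‖imB f‖ := by
        gcongr
        · exact abs_m_le_norm m hm1 hmpos _
        · exact abs_m_le_norm m hm1 hmpos _
    _ ≤ ‖f‖ + ‖f‖ := by gcongr; exacts [norm_reB_le f, norm_imB_le f]
    _ = 2 * ‖f‖ := by ring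

lemma mC_invariant (hminv : ∀ (g : G) (f : G →ᵇ ℝ),
      m (f.compContinuous ((Homeomorph.mulLeft g : G ≃ₜ G) : C(G, G))) = m f)
    (g : G) (f : G →ᵇ ℂ) :
    mC m (f.compContinuous ((Homeomorph.mulLeft g : G ≃ₜ G) : C(G, G))) = mC m f := by
  have h1 : reB (f.compContinuous ((Homeomorph.mulLeft g : G ≃ₜ G) : C(G, G))) =
      (reB f).compContinuous ((Homeomorph.mulLeft g : G ≃ₜ G) : C(G, G)) := by ext x; simp
  have h2 : imB (f.compContinuous ((Homeomorph.mulLeft g : G ≃ₜ G) : C(G, G))) =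
      (imB f).compContinuous ((Homeomorph.mulLeft g : G ≃ₜ G) : C(G, G)) := by ext x; simp
  rw [mC, mC, h1, h2, hminv, hminv]


variable {G : Type*} [Group G] [TopologicalSpace G] [IsTopologicalGroup G]
variable {H : Type} [NormedAddCommGroup H] [InnerProductSpace ℂ H] [CompleteSpace H]

/-- The matrix-coefficient bounded continuous function `g ↦ ⟪π g⁻¹ v, π g⁻¹ w⟫`. -/
def phiB (π : G →* (H ≃L[ℂ] H)) (hcont : ∀ v : H, Continuous fun g : G => π g v)
    (C : ℝ) (hC0 : 0 ≤ C) (hb : ∀ (g : G) (v : H), ‖π g v‖ ≤ C * ‖v‖) (v w : H) : G →ᵇ ℂ :=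
  ofNormedAddCommGroup (fun g => (inner ℂ (π g⁻¹ v) (π g⁻¹ w) : ℂ))
    (Continuous.inner ((hcont v).comp continuous_inv) ((hcont w).comp continuous_inv))
    (C * ‖v‖ * (C * ‖w‖))
    (fun g => (norm_inner_le_norm _ _).trans
      (mul_le_mul (hb _ v) (hb _ w) (norm_nonneg _) (by positivity)))

@[simp] lemma phiB_apply (π : G →* (H ≃L[ℂ] H)) (hcont : ∀ v : H, Continuous fun g : G => π g v)
    (C : ℝ) (hC0 : 0 ≤ C) (hb : ∀ (g : G) (v : H), ‖π g v‖ ≤ C * ‖v‖) (v w : H) (x : G) :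
    phiB π hcont C hC0 hb v w x = (inner ℂ (π x⁻¹ v) (π x⁻¹ w) : ℂ) := rfl

lemma norm_phiB_le (π : G →* (H ≃L[ℂ] H)) (hcont : ∀ v : H, Continuous fun g : G => π g v)
    (C : ℝ) (hC0 : 0 ≤ C) (hb : ∀ (g : G) (v : H), ‖π g v‖ ≤ C * ‖v‖) (v w : H) :
    ‖phiB π hcont C hC0 hb v w‖ ≤ C * ‖v‖ * (C * ‖w‖) :=
  norm_ofNormedAddCommGroup_le _ (by positivity) _

lemma pi_inv_apply (π : G →* (H ≃L[ℂ] H)) (g : G) (v : H) : π g⁻¹ (π g v) = v := by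
  rw [map_inv]
  exact (π g).symm_apply_apply v

lemma pi_mul_apply (π : G →* (H ≃L[ℂ] H)) (g h : G) (v : H) :
    π g (π h v) = π (g * h) v := by rw [map_mul]; rfl

section Main

variable {G : Type*} [Group G] [TopologicalSpace G] [IsTopologicalGroup G]
variable {H : Type} [NormedAddCommGroup H] [InnerProductSpace ℂ H] [CompleteSpace H]

theorem main_aux (m : (G →ᵇ ℝ) →ₗ[ℝ] ℝ)
    (hm1 : m (const G (1 : ℝ)) = 1) (hmpos : ∀ f : G →ᵇ ℝ, 0 ≤ f → 0 ≤ m f)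
    (hminv : ∀ (g : G) (f : G →ᵇ ℝ),
      m (f.compContinuous ((Homeomorph.mulLeft g : G ≃ₜ G) : C(G, G))) = m f)
    (π : G →* (H ≃L[ℂ] H)) (C₀ : ℝ) (hC₀ : ∀ g : G, ‖((π g : H →L[ℂ] H))‖ ≤ C₀)
    (hcont : ∀ v : H, Continuous fun g : G => π g v) :
    ∃ S : H ≃L[ℂ] H, ∀ (g : G) (v w : H),
      (inner ℂ (S (π g (S.symm v))) (S (π g (S.symm w))) : ℂ) = inner ℂ v w := by
  set C : ℝ := max C₀ 1 with hCdef
  have hC1 : (1 : ℝ) ≤ C := le_max_right _ _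
  have hC0 : (0 : ℝ) < C := lt_of_lt_of_le one_pos hC1
  have hb : ∀ (g : G) (v : H), ‖π g v‖ ≤ C * ‖v‖ := fun g v =>
    ((π g : H →L[ℂ] H).le_opNorm v).trans
      (mul_le_mul_of_nonneg_right ((hC₀ g).trans (le_max_left _ _)) (norm_nonneg v))
  have hlb : ∀ (g : G) (v : H), ‖v‖ ≤ C * ‖π g v‖ := fun g v => by
    have h1 := hb g⁻¹ (π g v)
    rwa [pi_inv_apply π g v] at h1
  set p : H → H → G →ᵇ ℂ := SNDaux.phiB π hcont C hC0.le hb with hpdef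
  set Φ : H → H → ℂ := fun v w => SNDaux.mC m (p v w) with hΦdef
  -- additivity and semilinearity of `Φ`
  have hadd_r : ∀ v w w' : H, Φ v (w + w') = Φ v w + Φ v w' := by
    intro v w w'
    have h : p v (w + w') = p v w + p v w' := by
      ext x; simp [hpdef, inner_add_right]
    simp only [hΦdef, h, SNDaux.mC_add]
  have hsmul_r : ∀ (a : ℂ) (v w : H), Φ v (a • w) = a * Φ v w := by
    intro a v w
    have h : p v (a • w) = a • p v w := by
      ext x; simp [hpdef, inner_smul_right]
    simp only [hΦdef, h, SNDaux.mC_smul]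
  have hconj : ∀ v w : H, Φ w v = starRingEnd ℂ (Φ v w) := by
    intro v w
    refine SNDaux.mC_conj m (p v w) (p w v) (fun x => ?_)
    simp only [hpdef, SNDaux.phiB_apply]
    rw [← inner_conj_symm]
  have hadd_l : ∀ v v' w : H, Φ (v + v') w = Φ v w + Φ v' w := by
    intro v v' w
    have h : p (v + v') w = p v w + p v' w := by
      ext x; simp [hpdef, inner_add_left]
    simp only [hΦdef, h, SNDaux.mC_add]
  have hsmul_l : ∀ (a : ℂ) (v w : H), Φ (a • v) w = starRingEnd ℂ a * Φ v w := by
    intro a v w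
    have h : p (a • v) w = (starRingEnd ℂ a) • p v w := by
      ext x; simp [hpdef, inner_smul_left, mul_comm]
    simp only [hΦdef, h, SNDaux.mC_smul]
  -- invariance of `Φ`
  have hinv : ∀ (h : G) (v w : H), Φ (π h v) (π h w) = Φ v w := by
    intro h v w
    have hcmp : p (π h v) (π h w) =
        (p v w).compContinuous ((Homeomorph.mulLeft h⁻¹ : G ≃ₜ G) : C(G, G)) := by
      ext x
      simp only [hpdef, SNDaux.phiB_apply, compContinuous_apply, ContinuousMap.coe_coe,
        Homeomorph.coe_mulLeft]
      rw [pi_mul_apply, pi_mul_apply]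
      congr 2 <;> simp [mul_inv_rev]
    simp only [hΦdef, hcmp, SNDaux.mC_invariant m hminv]
  -- `Φ v v` is real and bounded below
  have hreal : ∀ v : H, Φ v v = ((m (SNDaux.reB (p v v)) : ℝ) : ℂ) := by
    intro v
    refine SNDaux.mC_real m _ (fun x => ?_)
    simp only [hpdef, SNDaux.phiB_apply]
    exact inner_self_im (𝕜 := ℂ) _
  have hlow : ∀ v : H, (C⁻¹ * ‖v‖) ^ 2 ≤ m (SNDaux.reB (p v v)) := by
    intro v
    have h1 : const G ((C⁻¹ * ‖v‖) ^ 2) ≤ SNDaux.reB (p v v) := by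
      rw [SNDaux.bcf_le_iff]
      intro x
      simp only [const_apply', SNDaux.reB_apply, hpdef, SNDaux.phiB_apply]
      have hre : (inner ℂ (π x⁻¹ v) (π x⁻¹ v) : ℂ).re = ‖π x⁻¹ v‖ ^ 2 :=
        inner_self_eq_norm_sq (𝕜 := ℂ) _
      rw [hre]
      have h2 : C⁻¹ * ‖v‖ ≤ ‖π x⁻¹ v‖ := by
        rw [inv_mul_le_iff₀ hC0]
        exact hlb x⁻¹ v
      exact pow_le_pow_left₀ (by positivity) h2 2
    calc (C⁻¹ * ‖v‖) ^ 2 = m (const G ((C⁻¹ * ‖v‖) ^ 2)) := (SNDaux.m_const m hm1 _).symm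
      _ ≤ m (SNDaux.reB (p v v)) := SNDaux.m_mono m hmpos h1
  have hbound : ∀ v w : H, ‖Φ v w‖ ≤ 2 * (C * ‖v‖ * (C * ‖w‖)) := by
    intro v w
    calc ‖Φ v w‖ ≤ 2 * ‖p v w‖ := SNDaux.norm_mC_le m hm1 hmpos _
      _ ≤ 2 * (C * ‖v‖ * (C * ‖w‖)) := by
          have := SNDaux.norm_phiB_le π hcont C hC0.le hb v w
          rw [hpdef]; linarith
  -- construct the operator `T` with `⟪T v, w⟫ = Φ v w`
  have hfunc : ∀ v : H, ∃ tv : H, ∀ w : H, (inner ℂ tv w : ℂ) = Φ v w := by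
    intro v
    let L : H →ₗ[ℂ] ℂ :=
      { toFun := fun w => Φ v w
        map_add' := hadd_r v
        map_smul' := fun a w => by simp [hsmul_r a v w] }
    have hLb : ∀ w : H, ‖L w‖ ≤ (2 * (C * ‖v‖ * C)) * ‖w‖ := by
      intro w
      have := hbound v w
      calc ‖L w‖ = ‖Φ v w‖ := rfl
        _ ≤ 2 * (C * ‖v‖ * (C * ‖w‖)) := this
        _ = (2 * (C * ‖v‖ * C)) * ‖w‖ := by ring
    let Lc : H →L[ℂ] ℂ := LinearMap.mkContinuous L (2 * (C * ‖v‖ * C)) hLb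
    refine ⟨(InnerProductSpace.toDual ℂ H).symm Lc, fun w => ?_⟩
    rw [InnerProductSpace.toDual_symm_apply]
    rfl
  choose t ht using hfunc
  have hadd_t : ∀ v v' : H, t (v + v') = t v + t v' := by
    intro v v'
    refine ext_inner_right ℂ (fun w => ?_)
    rw [ht, inner_add_left, ht, ht, hadd_l]
  have hsmul_t : ∀ (a : ℂ) (v : H), t (a • v) = a • t v := by
    intro a v
    refine ext_inner_right ℂ (fun w => ?_)
    rw [ht, inner_smul_left, ht, hsmul_l]
  have hbound_t : ∀ v : H, ‖t v‖ ≤ (2 * (C * C)) * ‖v‖ := by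
    intro v
    by_cases hv : t v = 0
    · rw [hv, norm_zero]; positivity
    · have hre : (inner ℂ (t v) (t v) : ℂ).re = ‖t v‖ ^ 2 :=
        inner_self_eq_norm_sq (𝕜 := ℂ) _
      have h2 : ‖t v‖ ^ 2 ≤ 2 * (C * ‖v‖ * (C * ‖t v‖)) := by
        calc ‖t v‖ ^ 2 = (inner ℂ (t v) (t v) : ℂ).re := hre.symm
          _ ≤ |(inner ℂ (t v) (t v) : ℂ).re| := le_abs_self _
          _ ≤ ‖(inner ℂ (t v) (t v) : ℂ)‖ := Complex.abs_re_le_norm _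
          _ = ‖(inner ℂ (t v) (t v) : ℂ)‖ := rfl
          _ = ‖Φ v (t v)‖ := by rw [ht]
          _ ≤ 2 * (C * ‖v‖ * (C * ‖t v‖)) := hbound v (t v)
      have h3 : (0 : ℝ) < ‖t v‖ := norm_pos_iff.mpr hv
      nlinarith
  let T : H →L[ℂ] H := LinearMap.mkContinuous
    { toFun := t
      map_add' := hadd_t
      map_smul' := fun a v => by simp [hsmul_t a v] } (2 * (C * C)) hbound_t
  have hT : ∀ v w : H, (inner ℂ (T v) w : ℂ) = Φ v w := fun v w => ht v w
  -- `T` is symmetric, positive and invertible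
  have hsymT : (T : H →ₗ[ℂ] H).IsSymmetric := by
    intro v w
    simp only [ContinuousLinearMap.coe_coe]
    rw [hT, ← inner_conj_symm v (T w), hT, hconj v w]
    simp
  have hsymT' : ∀ v w : H, (inner ℂ (T v) w : ℂ) = inner ℂ v (T w) := fun v w => by
    have h := hsymT v w
    simpa using h
  have hTpos : T.IsPositive := by
    rw [ContinuousLinearMap.isPositive_iff_complex]
    intro x
    have hx := hT x x
    rw [hreal x] at hx
    rw [hx]
    constructor
    · simp
    · have : (RCLike.re ((m (SNDaux.reB (p x x)) : ℝ) : ℂ)) = m (SNDaux.reB (p x x)) := by simp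
      rw [this]
      exact le_trans (by positivity) (hlow x)
  have hTnn : (0 : H →L[ℂ] H) ≤ T := (ContinuousLinearMap.nonneg_iff_isPositive T).mpr hTpos
  have hTunit : IsUnit T := by
    refine ContinuousLinearMap.isUnit_of_forall_le_norm_inner_map T
      (c := Real.toNNReal ((C ^ 2)⁻¹)) (Real.toNNReal_pos.mpr (by positivity)) (fun x => ?_)
    have hx := hT x x
    rw [hreal x] at hx
    rw [hx]
    have hcoe : ((Real.toNNReal ((C ^ 2)⁻¹) : ℝ≥0) : ℝ) = (C ^ 2)⁻¹ :=
      Real.coe_toNNReal _ (by positivity)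
    rw [hcoe]
    have h1 : ‖x‖ ^ 2 * (C ^ 2)⁻¹ = (C⁻¹ * ‖x‖) ^ 2 := by
      rw [mul_pow]; ring
    calc ‖x‖ ^ 2 * (C ^ 2)⁻¹ = (C⁻¹ * ‖x‖) ^ 2 := h1
      _ ≤ m (SNDaux.reB (p x x)) := hlow x
      _ ≤ |m (SNDaux.reB (p x x))| := le_abs_self _
      _ = ‖((m (SNDaux.reB (p x x)) : ℝ) : ℂ)‖ := by simp
  -- the square root of `T`
  set S : H →L[ℂ] H := CFC.sqrt T with hSdef
  have hSnn : (0 : H →L[ℂ] H) ≤ S := CFC.sqrt_nonneg T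
  have hSS : S * S = T := CFC.sqrt_mul_sqrt_self T hTnn
  have hSsym : (S : H →ₗ[ℂ] H).IsSymmetric :=
    ContinuousLinearMap.isSelfAdjoint_iff_isSymmetric.mp
      ((ContinuousLinearMap.nonneg_iff_isPositive S).mp hSnn).isSelfAdjoint
  have hSunit : IsUnit S := by
    rw [isUnit_iff_exists]
    have hST : S * T = T * S := by
      rw [← hSS]; exact (mul_assoc S S S).symm
    have hcomm : (↑hTunit.unit⁻¹ : H →L[ℂ] H) * S = S * ↑hTunit.unit⁻¹ := by
      calc (↑hTunit.unit⁻¹ : H →L[ℂ] H) * S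
          = ↑hTunit.unit⁻¹ * S * (T * ↑hTunit.unit⁻¹) := by
            rw [hTunit.mul_val_inv, mul_one]
        _ = ↑hTunit.unit⁻¹ * ((S * T) * ↑hTunit.unit⁻¹) := by
            rw [mul_assoc, ← mul_assoc S T]
        _ = ↑hTunit.unit⁻¹ * T * (S * ↑hTunit.unit⁻¹) := by
            rw [hST, mul_assoc T S, ← mul_assoc]
        _ = S * ↑hTunit.unit⁻¹ := by rw [hTunit.val_inv_mul, one_mul]
    refine ⟨S * ↑hTunit.unit⁻¹, ?_, ?_⟩
    · rw [← mul_assoc, hSS, hTunit.mul_val_inv]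
    · rw [mul_assoc, hcomm, ← mul_assoc, hSS, hTunit.mul_val_inv]
  set e : H ≃L[ℂ] H := ContinuousLinearEquiv.unitsEquiv ℂ H hSunit.unit with hedef
  have he : ∀ x : H, e x = S x := fun x => by
    rw [hedef, ContinuousLinearEquiv.unitsEquiv_apply, IsUnit.unit_spec]
  have hkey : ∀ x y : H, (inner ℂ (S x) (S y) : ℂ) = Φ x y := by
    intro x y
    have h2 : S (S y) = T y := by rw [← ContinuousLinearMap.mul_apply, hSS]
    have h1 := hSsym x (S y)
    simp only [ContinuousLinearMap.coe_coe] at h1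
    rw [h1, h2, ← hsymT' x y]
    exact hT x y
  refine ⟨e, fun g v w => ?_⟩
  calc (inner ℂ (e (π g (e.symm v))) (e (π g (e.symm w))) : ℂ)
      = inner ℂ (S (π g (e.symm v))) (S (π g (e.symm w))) := by rw [he, he]
    _ = Φ (π g (e.symm v)) (π g (e.symm w)) := hkey _ _
    _ = Φ (e.symm v) (e.symm w) := hinv g _ _
    _ = inner ℂ (S (e.symm v)) (S (e.symm w)) := (hkey _ _).symm
    _ = inner ℂ (e (e.symm v)) (e (e.symm w)) := by rw [he, he]
    _ = inner ℂ v w := by rw [e.apply_symm_apply, e.apply_symm_apply]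


end Main
end SNDaux
end SNDaux
end SNDfull

open scoped BoundedContinuousFunction

/-- The Sz.-Nagy–Day–Dixmier theorem: every amenable topological group is unitarisable. -/
theorem unitarisable_of_amenable (G : Type*) [Group G] [TopologicalSpace G]
    [IsTopologicalGroup G] (hG : IsAmenableGroup G) : Unitarisable G := by
  obtain ⟨m, hm1, hmpos, hminv⟩ := hG
  intro H _ _ _ π hbdd hcont
  obtain ⟨C₀, hC₀⟩ := hbdd
  exact SNDaux.main_aux m hm1 hmpos hminv π C₀ hC₀ hcont
end

section
/- Let K/k be an algebraic field extension. Then the automorphism group Aut(K/k), equipped with the topology of pointwise convergence, is a profinite group (compact, Hausdorff, totally disconnected). -/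
open scoped Pointwise

section Aux

variable (k K : Type*) [Field k] [Field K] [Algebra k K] [Algebra.IsAlgebraic k K]

/-- The topology of pointwise convergence on `K ≃ₐ[k] K`, induced from the product of
discrete topologies. -/
def indT : TopologicalSpace (K ≃ₐ[k] K) :=
  TopologicalSpace.induced (fun σ => ⇑σ) (@Pi.topologicalSpace K (fun _ => K) (fun _ => ⊥))

theorem krull_compact_aux : CompactSpace (K ≃ₐ[k] K) := by
  haveI htg : IsTopologicalGroup (K ≃ₐ[k] K) := inferInstance
  letI tK : TopologicalSpace K := ⊥
  haveI : DiscreteTopology K := ⟨rfl⟩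
  let j : (K ≃ₐ[k] K) → (K → K) := fun σ => ⇑σ
  -- range j is the set of algebra hom maps
  have hrange : Set.range j = {f : K → K | (∀ x y, f (x + y) = f x + f y) ∧
      (∀ x y, f (x * y) = f x * f y) ∧ ∀ c, f (algebraMap k K c) = algebraMap k K c} := by
    ext f
    constructor
    · rintro ⟨σ, rfl⟩
      exact ⟨fun x y => map_add σ x y, fun x y => map_mul σ x y, fun c => σ.commutes c⟩
    · rintro ⟨h1, h2, h3⟩
      have hzero : f 0 = 0 := by
        have := h1 0 0
        rw [add_zero] at this
        exact (left_eq_add.mp this)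
      let g : K →ₐ[k] K :=
        { toFun := f
          map_one' := by simpa using h3 1
          map_mul' := h2
          map_zero' := hzero
          map_add' := h1
          commutes' := h3 }
      exact ⟨AlgEquiv.ofBijective g (Algebra.IsAlgebraic.algHom_bijective g), rfl⟩
  -- it's closed
  have hclosed : IsClosed (Set.range j) := by
    rw [hrange]
    have e1 : IsClosed {f : K → K | ∀ x y, f (x + y) = f x + f y} := by
      rw [show {f : K → K | ∀ x y, f (x + y) = f x + f y}
          = ⋂ (x) (y), {f : K → K | f (x + y) = f x + f y} by
        ext f; simp [Set.mem_iInter]]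
      exact isClosed_iInter fun x => isClosed_iInter fun y =>
        isClosed_eq (continuous_apply _) ((continuous_apply x).add (continuous_apply y))
    have e2 : IsClosed {f : K → K | ∀ x y, f (x * y) = f x * f y} := by
      rw [show {f : K → K | ∀ x y, f (x * y) = f x * f y}
          = ⋂ (x) (y), {f : K → K | f (x * y) = f x * f y} by
        ext f; simp [Set.mem_iInter]]
      exact isClosed_iInter fun x => isClosed_iInter fun y =>
        isClosed_eq (continuous_apply _) ((continuous_apply x).mul (continuous_apply y))
    have e3 : IsClosed {f : K → K | ∀ c, f (algebraMap k K c) = algebraMap k K c} := by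
      rw [show {f : K → K | ∀ c, f (algebraMap k K c) = algebraMap k K c}
          = ⋂ (c : k), {f : K → K | f (algebraMap k K c) = algebraMap k K c} by
        ext f; simp [Set.mem_iInter]]
      exact isClosed_iInter fun c =>
        isClosed_eq (continuous_apply _) continuous_const
    rw [Set.setOf_and, Set.setOf_and]
    exact e1.inter (e2.inter e3)
  -- range j is contained in a compact product of root sets
  have hsub : Set.range j ⊆ Set.pi Set.univ (fun x : K => (minpoly k x).rootSet K) := by
    rintro f ⟨σ, rfl⟩ x _
    have hx : IsIntegral k x := Algebra.IsIntegral.isIntegral x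
    refine Polynomial.mem_rootSet.mpr ⟨minpoly.ne_zero hx, ?_⟩
    have h := Polynomial.aeval_algHom_apply (σ : K →ₐ[k] K) x (minpoly k x)
    rw [minpoly.aeval] at h
    simpa [j] using h
  have hCcomp : IsCompact (Set.pi Set.univ (fun x : K => (minpoly k x).rootSet K)) :=
    isCompact_univ_pi fun x => ((minpoly k x).rootSet_finite K).isCompact
  have hcomp : IsCompact (Set.range j) := hCcomp.of_isClosed_subset hclosed hsub
  -- the induced topology is compact
  have hindc : @IsCompact _ (indT k K) Set.univ := by
    have hind : @Topology.IsInducing _ _ (indT k K) _ j := @Topology.IsInducing.induced _ _ _ j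
    rw [@Topology.IsInducing.isCompact_iff _ _ (indT k K) _ _ _ hind, Set.image_univ]
    exact hcomp
  -- the induced topology is finer than the Krull topology
  have hle : (indT k K) ≤ krullTopology k K := by
    rw [← @continuous_id_iff_le _ (indT k K) (krullTopology k K)]
    rw [@continuous_iff_continuousAt _ _ (indT k K) (krullTopology k K)]
    intro σ
    show Filter.Tendsto id (@nhds _ (indT k K) σ) (@nhds _ (krullTopology k K) σ)
    rw [Filter.tendsto_def]
    intro s hs
    simp only [Set.preimage_id]
    have hmap : Filter.map (fun x => σ * x) (@nhds _ (krullTopology k K) 1)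
        = @nhds _ (krullTopology k K) σ := map_mul_left_nhds_one σ
    rw [← hmap, Filter.mem_map, krullTopology_mem_nhds_one_iff] at hs
    obtain ⟨E, hfin, hEs⟩ := hs
    haveI := hfin
    let b := Module.finBasis k E
    let W : Set (K ≃ₐ[k] K) := ⋂ i, {τ : K ≃ₐ[k] K | τ (b i : K) = σ (b i : K)}
    have hWopen : @IsOpen _ (indT k K) W := by
      refine @isOpen_iInter_of_finite _ _ (indT k K) _ _ fun i => ?_
      have heq : {τ : K ≃ₐ[k] K | τ (b i : K) = σ (b i : K)}
          = j ⁻¹' ((fun f : K → K => f (b i : K)) ⁻¹' {σ (b i : K)}) := rfl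
      rw [heq]
      exact @Continuous.isOpen_preimage _ _ (indT k K) _ j (@continuous_induced_dom _ _ j _) _
        ((isOpen_discrete _).preimage (continuous_apply _))
    have hσW : σ ∈ W := Set.mem_iInter.mpr fun i => rfl
    have hWs : W ⊆ s := by
      intro τ hτ
      have hfix : σ⁻¹ * τ ∈ E.fixingSubgroup := by
        rw [IntermediateField.mem_fixingSubgroup_iff]
        intro e he
        have he' : e = ∑ i, b.repr ⟨e, he⟩ i • (b i : K) := by
          have h0 := congrArg (E.val) (b.sum_repr ⟨e, he⟩).symm
          exact h0.trans (by rw [map_sum]; rfl)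
        have hτσ : τ e = σ e := by
          rw [he', map_sum, map_sum]
          refine Finset.sum_congr rfl fun i _ => ?_
          rw [map_smul, map_smul]
          have := Set.mem_iInter.mp hτ i
          rw [this]
        show (σ⁻¹ * τ) e = e
        rw [AlgEquiv.mul_apply, hτσ]
        exact σ.symm_apply_apply e
      have := hEs hfix
      simpa [mul_inv_cancel_left] using this
    exact Filter.mem_of_superset (@IsOpen.mem_nhds _ (indT k K) σ W hWopen hσW) hWs
  -- conclude
  have hkc : @IsCompact _ (krullTopology k K) Set.univ := by
    intro f hne hf
    obtain ⟨x, hx, hcl⟩ := hindc hf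
    exact ⟨x, hx, Filter.NeBot.mono hcl (inf_le_inf_right f (nhds_mono hle))⟩
  exact isCompact_univ_iff.mp hkc

end Aux

/-- The automorphism group of an algebraic field extension `K/k`, with the topology of
pointwise convergence (the Krull topology), is a profinite group: compact, Hausdorff and
totally disconnected. -/
theorem galoisGroup_profinite_of_algebraic (k K : Type*) [Field k] [Field K] [Algebra k K]
    [Algebra.IsAlgebraic k K] :
    CompactSpace (K ≃ₐ[k] K) ∧ T2Space (K ≃ₐ[k] K) ∧ TotallyDisconnectedSpace (K ≃ₐ[k] K) := by
  exact ⟨krull_compact_aux k K, krullTopology_t2, inferInstance⟩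
end

section
/- Every profinite group is isomorphic (as a topological group) to the Galois group Aut(K/k) of some algebraic Galois field extension K/k. -/
set_option linter.unusedSectionVars false
set_option synthInstance.maxHeartbeats 1000000
set_option maxHeartbeats 1000000
set_option linter.deprecated false

open Polynomial MulAction Pointwise

universe u

namespace Waterhouse

section PartA

variable {G : Type*} [Group G] [TopologicalSpace G] [IsTopologicalGroup G] [CompactSpace G]
variable {F : Type*} [Field F] [MulSemiringAction G F]

/-- The action is smooth: every element has an open normal subgroup fixing it. -/
def Smooth (G F : Type*) [Group G] [TopologicalSpace G] [Field F] [MulSemiringAction G F] : Prop :=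
  ∀ x : F, ∃ N : OpenNormalSubgroup G, ∀ n ∈ N, n • x = x

variable (hs : Smooth G F)
include hs

theorem orbit_finite (x : F) : (orbit G x).Finite := by
  obtain ⟨N, hN⟩ := hs x
  have hopen : IsOpen ((stabilizer G x : Subgroup G) : Set G) :=
    Subgroup.isOpen_mono (H₁ := N.toSubgroup) (fun n hn => hN n hn) N.isOpen
  have : Finite (G ⧸ stabilizer G x) := Subgroup.quotient_finite_of_isOpen _ hopen
  have : Finite (orbit G x) := Finite.of_equiv _ (orbitEquivQuotientStabilizer G x).symm
  exact Set.toFinite _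

theorem exists_poly (x : F) :
    ∃ f' : Polynomial (FixedPoints.subfield G F), f'.Monic ∧
      Polynomial.map (algebraMap (FixedPoints.subfield G F) F) f' =
        ∏ y ∈ (orbit_finite hs x).toFinset, (X - C y) := by
  classical
  set os := (orbit_finite hs x).toFinset with hos
  set f : F[X] := ∏ y ∈ os, (X - C y) with hf
  have hcoeff : ↑f.coeffs ⊆ ((FixedPoints.subfield G F).toSubring : Set F) := by
    intro c hc
    simp only [Finset.mem_coe, Polynomial.mem_coeffs_iff] at hc
    obtain ⟨n, -, rfl⟩ := hc
    intro g
    have himg : Finset.image (g • ·) os = os := by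
      ext y
      simp only [Finset.mem_image, Set.Finite.mem_toFinset, hos]
      constructor
      · rintro ⟨z, hz, rfl⟩
        exact (MulAction.smul_orbit g x) ▸ Set.smul_mem_smul_set hz
      · intro hy
        refine ⟨g⁻¹ • y, ?_, smul_inv_smul g y⟩
        exact (MulAction.smul_orbit g⁻¹ x) ▸ Set.smul_mem_smul_set hy
    have hgf : g • f = f := by
      have h1 : g • f = ∏ y ∈ os, (X - C (g • y)) := by
        calc g • f = (MulSemiringAction.toRingAut G F[X] g) f := rfl
        _ = ∏ y ∈ os, (MulSemiringAction.toRingAut G F[X] g) (X - C y) := map_prod _ _ _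
        _ = ∏ y ∈ os, (X - C (g • y)) := by
              refine Finset.prod_congr rfl fun y _ => ?_
              show g • (X - C y) = _
              rw [smul_sub, Polynomial.smul_X, Polynomial.smul_C]
      have h2 : ∏ y ∈ os, (X - C (g • y)) =
          ∏ y ∈ Finset.image (g • ·) os, (X - C y) :=
        (Finset.prod_image (f := fun y : F => X - C y) (g := (g • ·)) (s := os)
          (fun a _ b _ h => smul_left_cancel g h)).symm
      rw [h1, h2, himg]
    show g • f.coeff n = f.coeff n
    rw [← Polynomial.coeff_smul, hgf]
  refine ⟨f.toSubring _ hcoeff, ?_, ?_⟩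
  · rw [Polynomial.monic_toSubring]
    exact monic_prod_of_monic _ _ fun y _ => monic_X_sub_C y
  · rw [FixedPoints.coe_algebraMap, ← Subfield.toSubring_subtype_eq_subtype]
    exact Polynomial.map_toSubring f (FixedPoints.subfield G F).toSubring hcoeff

theorem isIntegral (x : F) : IsIntegral (FixedPoints.subfield G F) x := by
  obtain ⟨f', hmonic, hmap⟩ := exists_poly hs x
  refine ⟨f', hmonic, ?_⟩
  rw [← Polynomial.eval_map, hmap, Polynomial.eval_prod]
  exact Finset.prod_eq_zero ((orbit_finite hs x).mem_toFinset.mpr (mem_orbit_self x))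
    (by simp)

theorem aeval_poly_eq_zero (x : F) {f' : Polynomial (FixedPoints.subfield G F)}
    (hmap : Polynomial.map (algebraMap (FixedPoints.subfield G F) F) f' =
        ∏ y ∈ (orbit_finite hs x).toFinset, (X - C y)) :
    aeval x f' = 0 := by
  rw [aeval_def, ← Polynomial.eval_map, hmap, Polynomial.eval_prod]
  exact Finset.prod_eq_zero ((orbit_finite hs x).mem_toFinset.mpr (mem_orbit_self x)) (by simp)

theorem splits_minpoly (x : F) :
    Splits ((minpoly (FixedPoints.subfield G F) x).map (algebraMap (FixedPoints.subfield G F) F)) := by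
  obtain ⟨f', hmonic, hmap⟩ := exists_poly hs x
  refine Polynomial.Splits.of_dvd ?_ (Polynomial.map_ne_zero hmonic.ne_zero)
    (Polynomial.map_dvd _ (minpoly.dvd _ x (aeval_poly_eq_zero hs x hmap)))
  rw [hmap]
  exact Polynomial.Splits.prod fun y _ => Polynomial.Splits.X_sub_C _

theorem separable_minpoly (x : F) : (minpoly (FixedPoints.subfield G F) x).Separable := by
  obtain ⟨f', hmonic, hmap⟩ := exists_poly hs x
  have hsep : f'.Separable := by
    rw [← Polynomial.separable_map (algebraMap (FixedPoints.subfield G F) F), hmap]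
    exact Polynomial.separable_prod_X_sub_C_iff'.2 fun a _ b _ h => h
  exact hsep.of_dvd (minpoly.dvd _ x (aeval_poly_eq_zero hs x hmap))

theorem isGalois : IsGalois (FixedPoints.subfield G F) F := by
  haveI : Algebra.IsIntegral (FixedPoints.subfield G F) F := ⟨isIntegral hs⟩
  haveI : Normal (FixedPoints.subfield G F) F :=
    normal_iff.mpr fun x => ⟨isIntegral hs x, splits_minpoly hs x⟩
  haveI : Algebra.IsSeparable (FixedPoints.subfield G F) F := ⟨fun x => separable_minpoly hs x⟩
  exact IsGalois.mk

theorem algHom_apply_mem_orbit (σ : F →ₐ[FixedPoints.subfield G F] F) (x : F) :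
    σ x ∈ orbit G x := by
  obtain ⟨f', hmonic, hmap⟩ := exists_poly hs x
  have hx0 : aeval x f' = 0 := aeval_poly_eq_zero hs x hmap
  have h2 : aeval (σ x) f' = 0 := by
    rw [Polynomial.aeval_algHom_apply σ x f', hx0, map_zero]
  have h3 : Polynomial.eval (σ x) (∏ y ∈ (orbit_finite hs x).toFinset, (X - C y)) = 0 := by
    rw [← hmap, Polynomial.eval_map, ← aeval_def]; exact h2
  rw [Polynomial.eval_prod, Finset.prod_eq_zero_iff] at h3
  obtain ⟨y, hy, hy0⟩ := h3
  simp only [eval_sub, eval_X, eval_C, sub_eq_zero] at hy0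
  rw [hy0]
  exact (orbit_finite hs x).mem_toFinset.mp hy


end PartA

section PartB

variable {G : Type*} [Group G] [TopologicalSpace G] [IsTopologicalGroup G] [CompactSpace G]
variable {F : Type*} [Field F] [MulSemiringAction G F]

/-- The subfield of elements fixed by a subgroup. -/
def fixedSubfield (N : Subgroup G) (F : Type*) [Field F] [MulSemiringAction G F] : Subfield F where
  carrier := {x | ∀ n ∈ N, n • x = x}
  mul_mem' hx hy := fun n hn => by rw [smul_mul', hx n hn, hy n hn]
  one_mem' := fun n _ => smul_one n
  add_mem' hx hy := fun n hn => by rw [smul_add, hx n hn, hy n hn]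
  zero_mem' := fun n _ => smul_zero n
  neg_mem' hx := fun n hn => by rw [smul_neg, hx n hn]
  inv_mem' x hx := fun n hn => by rw [smul_inv'', hx n hn]

theorem mem_fixedSubfield {N : Subgroup G} {x : F} :
    x ∈ fixedSubfield N F ↔ ∀ n ∈ N, n • x = x := Iff.rfl

theorem orbit_subset_fixedSubfield (N : Subgroup G) [hN : N.Normal] {x : F}
    (hx : x ∈ fixedSubfield N F) : orbit G x ⊆ fixedSubfield N F := by
  rintro _ ⟨g, rfl⟩ n hn
  have hmem : (g⁻¹ * n * g) ∈ N := by
    simpa using hN.conj_mem n hn g⁻¹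
  calc n • g • x = (n * g) • x := (mul_smul _ _ _).symm
  _ = (g * (g⁻¹ * n * g)) • x := by group
  _ = g • ((g⁻¹ * n * g) • x) := mul_smul _ _ _
  _ = g • x := by rw [hx _ hmem]

variable (hs : Smooth G F)
include hs

theorem isClosed_smul_eq (x y : F) : IsClosed {g : G | g • x = y} := by
  obtain ⟨N, hN⟩ := hs x
  have coset : ∀ g : G, ∀ h ∈ g • (N : Set G), h • x = g • x := by
    rintro g _ ⟨n, hn, rfl⟩
    show (g * n) • x = g • x
    rw [mul_smul, hN n hn]
  rw [← isOpen_compl_iff, isOpen_iff_mem_nhds]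
  intro g hg
  refine Filter.mem_of_superset ((N.isOpen.smul g).mem_nhds ?_) ?_
  · exact ⟨1, N.one_mem, mul_one g⟩
  · intro h hh
    simp only [Set.mem_compl_iff, Set.mem_setOf_eq] at hg ⊢
    rw [coset g h hh]; exact hg

theorem exists_agree (σ : F ≃ₐ[FixedPoints.subfield G F] F) (N : OpenNormalSubgroup G) :
    ∃ g : G, ∀ x : F, x ∈ fixedSubfield N.toSubgroup F → g • x = σ x := by
  classical
  set L : Subfield F := fixedSubfield N.toSubgroup F with hLdef
  haveI : IsInvariantSubfield G L := by
    constructor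
    intro g x hx
    exact orbit_subset_fixedSubfield N.toSubgroup hx ⟨g, rfl⟩
  set Q := G ⧸ N.toSubgroup with hQdef
  haveI : Finite Q := N.toSubgroup.quotient_finite_of_isOpen N.isOpen
  let τ : G →* RingAut ↥L := MulSemiringAction.toRingAut G ↥L
  have hker : ∀ n ∈ N.toSubgroup, τ n = 1 := fun n hn =>
    RingEquiv.ext fun x => Subtype.ext (x.2 n hn)
  let φ : Q →* RingAut ↥L := QuotientGroup.lift _ τ hker
  letI : MulSemiringAction Q ↥L := MulSemiringAction.compHom _ φ
  have hQsmul : ∀ (g : G) (x : ↥L), (QuotientGroup.mk g : Q) • x = g • x := fun g x => rfl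
  have hmapsto : ∀ x : F, x ∈ L → (σ : F →ₐ[FixedPoints.subfield G F] F) x ∈ L := fun x hx =>
    orbit_subset_fixedSubfield N.toSubgroup hx (algHom_apply_mem_orbit hs _ x)
  have hmapsto' : ∀ x : F, x ∈ L → (σ.symm : F →ₐ[FixedPoints.subfield G F] F) x ∈ L := fun x hx =>
    orbit_subset_fixedSubfield N.toSubgroup hx (algHom_apply_mem_orbit hs _ x)
  let r0 : ↥L ≃+* ↥L :=
  { toFun := fun x => ⟨σ (x : F), hmapsto (x : F) x.2⟩
    invFun := fun x => ⟨σ.symm (x : F), hmapsto' (x : F) x.2⟩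
    left_inv := fun x => Subtype.ext (σ.symm_apply_apply (x : F))
    right_inv := fun x => Subtype.ext (σ.apply_symm_apply (x : F))
    map_mul' := fun x y => Subtype.ext (by push_cast; exact map_mul σ (x : F) (y : F))
    map_add' := fun x y => Subtype.ext (by push_cast; exact map_add σ (x : F) (y : F)) }
  have hfix : ∀ c : ↥(FixedPoints.subfield Q ↥L), ((c : ↥L) : F) ∈ FixedPoints.subfield G F := by
    intro c g
    exact congrArg Subtype.val (c.2 (QuotientGroup.mk g))
  let r : ↥L ≃ₐ[FixedPoints.subfield Q ↥L] ↥L := AlgEquiv.ofRingEquiv (f := r0)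
    (fun c => Subtype.ext (σ.commutes ⟨((c : ↥L) : F), hfix c⟩))
  obtain ⟨q, hq⟩ := FixedPoints.toAlgAut_surjective Q ↥L r
  obtain ⟨g, rfl⟩ := QuotientGroup.mk_surjective q
  refine ⟨g, fun x hx => ?_⟩
  have h1 : MulSemiringAction.toAlgAut Q (↥(FixedPoints.subfield Q ↥L)) ↥L
      (QuotientGroup.mk g) ⟨x, hx⟩ = r ⟨x, hx⟩ := by rw [hq]
  have h2 : (QuotientGroup.mk g : Q) • (⟨x, hx⟩ : ↥L) = r ⟨x, hx⟩ := h1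
  rw [hQsmul] at h2
  exact congrArg Subtype.val h2

theorem toAlgAut_surjective_cpt :
    Function.Surjective (MulSemiringAction.toAlgAut G (FixedPoints.subfield G F) F) := by
  intro σ
  haveI : Nonempty (OpenNormalSubgroup G) :=
    ⟨{ toOpenSubgroup := ⊤, isNormal' := by constructor; intros; trivial }⟩
  set C : OpenNormalSubgroup G → Set G :=
    fun N => {g | ∀ x ∈ fixedSubfield N.toSubgroup F, g • x = σ x} with hC
  have hclosed : ∀ N, IsClosed (C N) := by
    intro N
    have : C N = ⋂ x : fixedSubfield N.toSubgroup F, {g : G | g • (x : F) = σ x} := by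
      ext g
      simp only [hC, Set.mem_setOf_eq, Set.mem_iInter]
      exact ⟨fun h x => h x.1 x.2, fun h x hx => h ⟨x, hx⟩⟩
    rw [this]
    exact isClosed_iInter fun x => isClosed_smul_eq hs _ _
  have hdir : Directed (· ⊇ ·) C := by
    intro N M
    refine ⟨N ⊓ M, ?_, ?_⟩
    · intro g hg x hx
      exact hg x (fun n hn => hx n (Subgroup.mem_inf.mp hn).1)
    · intro g hg x hx
      exact hg x (fun n hn => hx n (Subgroup.mem_inf.mp hn).2)
  have hne : ∀ N, (C N).Nonempty := fun N => (exists_agree hs σ N).imp (fun g h x hx => h x hx)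
  obtain ⟨g, hg⟩ := IsCompact.nonempty_iInter_of_directed_nonempty_isCompact_isClosed C hdir hne
    (fun N => (hclosed N).isCompact) hclosed
  refine ⟨g, AlgEquiv.ext fun x => ?_⟩
  obtain ⟨N, hN⟩ := hs x
  exact (Set.mem_iInter.mp hg N) x hN


end PartB

section PartC

variable {G : Type*} [Group G] [TopologicalSpace G] [IsTopologicalGroup G] [CompactSpace G]
variable {F : Type*} [Field F] [MulSemiringAction G F]

variable (hs : Smooth G F)
include hs

theorem continuous_toAlgAut :
    Continuous ⇑(MulSemiringAction.toAlgAut G (FixedPoints.subfield G F) F) := by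
  classical
  apply continuous_of_continuousAt_one
  rw [ContinuousAt, map_one]
  intro s hsn
  rw [krullTopology_mem_nhds_one_iff] at hsn
  obtain ⟨E, hfin, hE⟩ := hsn
  haveI := hfin
  let b := Module.finBasis (FixedPoints.subfield G F) E
  let Ns : Fin (Module.finrank (FixedPoints.subfield G F) E) → OpenNormalSubgroup G :=
    fun i => (hs ((b i : ↥E) : F)).choose
  let K : Subgroup G := ⨅ i, ((Ns i : Subgroup G))
  have hKopen : IsOpen (K : Set G) := by
    have hKeq : (K : Set G) = ⋂ i, (((Ns i : Subgroup G)) : Set G) := by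
      ext g; simp [K, Subgroup.mem_iInf]
    rw [hKeq]
    exact isOpen_iInter_of_finite fun i => (Ns i).isOpen
  rw [Filter.mem_map]
  refine Filter.mem_of_superset (hKopen.mem_nhds K.one_mem) ?_
  intro n hn
  apply hE
  rw [SetLike.mem_coe, IntermediateField.mem_fixingSubgroup_iff]
  intro y hy
  show n • y = y
  have hb : ∀ i, n • ((b i : ↥E) : F) = ((b i : ↥E) : F) := fun i =>
    (hs ((b i : ↥E) : F)).choose_spec n (Subgroup.mem_iInf.mp hn i)
  have hyspan : (⟨y, hy⟩ : ↥E) ∈ Submodule.span (FixedPoints.subfield G F) (Set.range b) := by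
    rw [b.span_eq]; trivial
  have key : ∀ z : ↥E, z ∈ Submodule.span (FixedPoints.subfield G F) (Set.range b) →
      n • (z : F) = (z : F) := by
    intro z hz
    refine Submodule.span_induction ?_ ?_ ?_ ?_ hz
    · rintro _ ⟨i, rfl⟩; exact hb i
    · simp
    · intro u v _ _ hu hv
      push_cast
      rw [smul_add, hu, hv]
    · intro c u _ hu
      have hcoe : ((c • u : ↥E) : F) = (c : F) * (u : F) := by
        push_cast
        rw [Algebra.smul_def]
        rfl
      rw [hcoe, smul_mul', c.2 n, hu]
  exact key ⟨y, hy⟩ hyspan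


end PartC

section PartD

variable (G : Type u) [Group G] [TopologicalSpace G] [IsTopologicalGroup G] [CompactSpace G]

/-- The set on which `G` acts: the disjoint union of all quotients by open normal subgroups. -/
abbrev SS := Σ N : OpenNormalSubgroup G, G ⧸ N.toSubgroup

example : MulAction G (SS G) := inferInstance

theorem point_fixed (t : SS G) {n : G} (hn : n ∈ (t.1 : Subgroup G)) : n • t = t := by
  obtain ⟨N, c⟩ := t
  induction c using QuotientGroup.induction_on with
  | H h =>
    show (⟨N, n • ((h : G ⧸ N.toSubgroup))⟩ : SS G) = ⟨N, (h : G ⧸ N.toSubgroup)⟩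
    rw [MulAction.Quotient.smul_mk]
    congr 1
    rw [QuotientGroup.eq]
    have : (n • h)⁻¹ * h = h⁻¹ * n⁻¹ * h := by
      show (n * h)⁻¹ * h = _
      group
    rw [this]
    simpa using N.isNormal'.conj_mem n⁻¹ (N.toSubgroup.inv_mem hn) h⁻¹

theorem eq_one_of_mem_all [T2Space G] [TotallyDisconnectedSpace G] {g : G}
    (h : ∀ N : OpenNormalSubgroup G, g ∈ N) : g = 1 := by
  by_contra hg
  haveI : TotallySeparatedSpace G := inferInstance
  obtain ⟨U, hU, h1U, hgU⟩ :=
    @exists_isClopen_of_totally_separated G _ _ (1 : G) g (fun e => hg e.symm)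
  obtain ⟨N, hN⟩ := IsTopologicalGroup.exist_openNormalSubgroup_sub_clopen_nhds_of_one hU h1U
  exact hgU (hN (h N))

/-- Intersection of the subgroups appearing in a finite set of points of `SS G`. -/
def finInf (s : Finset (SS G)) : OpenNormalSubgroup G where
  toOpenSubgroup :=
    { toSubgroup := ⨅ t ∈ s, ((t.1 : Subgroup G))
      isOpen' := by
        have hset : (((⨅ t ∈ s, ((t.1 : Subgroup G))) : Subgroup G) : Set G) =
            ⋂ t ∈ s, (((t.1 : Subgroup G)) : Set G) := by
          ext g; simp [Subgroup.mem_iInf]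
        show IsOpen (((⨅ t ∈ s, ((t.1 : Subgroup G))) : Subgroup G) : Set G)
        rw [hset]
        exact isOpen_biInter_finset fun t _ => t.1.isOpen }
  isNormal' := by
    constructor
    intro a ha gg
    simp only [Subgroup.mem_iInf] at ha ⊢
    intro t ht
    exact t.1.isNormal'.conj_mem _ (ha t ht) gg

theorem mem_finInf {s : Finset (SS G)} {n : G} (hn : n ∈ finInf G s) :
    ∀ t ∈ s, n ∈ (t.1 : Subgroup G) := by
  have := Subgroup.mem_iInf.mp hn
  intro t ht
  exact Subgroup.mem_iInf.mp (this t) ht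

/-- The group of permutations of variables acting on the polynomial ring. -/
noncomputable def permAut : Equiv.Perm (SS G) →* RingAut (MvPolynomial (SS G) ℚ) where
  toFun e := (MvPolynomial.renameEquiv ℚ e).toRingEquiv
  map_one' := RingEquiv.ext fun p => by
    show MvPolynomial.rename (⇑(1 : Equiv.Perm (SS G))) p = p
    rw [Equiv.Perm.coe_one, MvPolynomial.rename_id, AlgHom.id_apply]
  map_mul' e₁ e₂ := RingEquiv.ext fun p => by
    show MvPolynomial.rename (⇑(e₁ * e₂)) p =
      MvPolynomial.rename (⇑e₁) (MvPolynomial.rename (⇑e₂) p)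
    rw [MvPolynomial.rename_rename, Equiv.Perm.coe_mul]

theorem permAut_apply (e : Equiv.Perm (SS G)) (p : MvPolynomial (SS G) ℚ) :
    permAut G e p = MvPolynomial.rename e p := rfl

/-- `G` acting on the polynomial ring by renaming variables. -/
noncomputable def rhoR : G →* RingAut (MvPolynomial (SS G) ℚ) :=
  (permAut G).comp (MulAction.toPermHom G (SS G))

theorem rhoR_apply (g : G) (p : MvPolynomial (SS G) ℚ) :
    rhoR G g p = MvPolynomial.rename (g • ·) p := rfl

theorem fracAut_ext {R : Type*} [CommRing R] [IsDomain R] {e₁ e₂ : RingAut (FractionRing R)}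
    (h : ∀ r : R, e₁ (algebraMap R (FractionRing R) r) = e₂ (algebraMap R (FractionRing R) r)) :
    e₁ = e₂ := by
  have h2 : (e₁ : FractionRing R →+* FractionRing R).comp (algebraMap R (FractionRing R)) =
      (e₂ : FractionRing R →+* FractionRing R).comp (algebraMap R (FractionRing R)) := by
    ext r; simpa using h r
  have h3 := IsLocalization.ringHom_ext (nonZeroDivisors R) h2
  exact RingEquiv.ext fun x => RingHom.congr_fun h3 x

theorem map_nzd {R : Type*} [CommRing R] [IsDomain R] (e : RingAut R) :
    Submonoid.map (RingEquiv.toMonoidHom e) (nonZeroDivisors R) = nonZeroDivisors R := by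
  ext x
  simp only [Submonoid.mem_map, mem_nonZeroDivisors_iff_ne_zero]
  constructor
  · rintro ⟨y, hy, rfl⟩
    simpa using hy
  · intro hx
    refine ⟨e.symm x, by simpa using hx, by simp⟩

/-- One automorphism of the fraction field. -/
noncomputable def fracAut {R : Type*} [CommRing R] [IsDomain R] (e : RingAut R) :
    RingAut (FractionRing R) :=
  IsLocalization.ringEquivOfRingEquiv (FractionRing R) (FractionRing R) e (map_nzd e)

theorem fracAut_algebraMap {R : Type*} [CommRing R] [IsDomain R] (e : RingAut R) (r : R) :
    fracAut e (algebraMap R (FractionRing R) r) = algebraMap R (FractionRing R) (e r) :=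
  IsLocalization.ringEquivOfRingEquiv_eq _ _

/-- The extension of the action to the fraction field. -/
noncomputable def rhoF : G →* RingAut (FractionRing (MvPolynomial (SS G) ℚ)) where
  toFun g := fracAut (rhoR G g)
  map_one' := fracAut_ext fun r => by
    rw [fracAut_algebraMap, map_one]
    rfl
  map_mul' g₁ g₂ := fracAut_ext fun r => by
    show fracAut (rhoR G (g₁ * g₂)) (algebraMap _ _ r) =
      fracAut (rhoR G g₁) (fracAut (rhoR G g₂) (algebraMap _ _ r))
    rw [fracAut_algebraMap, fracAut_algebraMap, fracAut_algebraMap, map_mul]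
    rfl

theorem rhoF_algebraMap (g : G) (r : MvPolynomial (SS G) ℚ) :
    rhoF G g (algebraMap _ (FractionRing (MvPolynomial (SS G) ℚ)) r) =
      algebraMap _ _ (rhoR G g r) :=
  fracAut_algebraMap _ _


end PartD

section PartE

variable (G : Type u) [Group G] [TopologicalSpace G] [IsTopologicalGroup G] [CompactSpace G]

/-- The `G`-action on the big rational function field. -/
noncomputable def actF : MulSemiringAction G (FractionRing (MvPolynomial (SS G) ℚ)) :=
  MulSemiringAction.compHom _ (rhoF G)

attribute [local instance] actF

theorem smul_def' (g : G) (x : FractionRing (MvPolynomial (SS G) ℚ)) :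
    g • x = rhoF G g x := rfl

theorem smul_algebraMap' (g : G) (r : MvPolynomial (SS G) ℚ) :
    g • (algebraMap _ (FractionRing (MvPolynomial (SS G) ℚ)) r) =
      algebraMap _ _ (MvPolynomial.rename (g • ·) r) := by
  rw [smul_def', rhoF_algebraMap]
  rfl

theorem smooth : Smooth G (FractionRing (MvPolynomial (SS G) ℚ)) := by
  intro x
  obtain ⟨a, b, hb, hx⟩ := IsFractionRing.div_surjective (A := MvPolynomial (SS G) ℚ) x
  obtain ⟨s, p, q, hp, hq⟩ := MvPolynomial.exists_finset_rename₂ a b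
  refine ⟨finInf G s, fun n hn => ?_⟩
  have hval : ((n • ·) ∘ (Subtype.val : {t // t ∈ s} → SS G)) = Subtype.val :=
    funext fun t => point_fixed G t.1 (mem_finInf G hn t.1 t.2)
  have hfix : ∀ u : MvPolynomial {t // t ∈ s} ℚ,
      n • algebraMap _ (FractionRing (MvPolynomial (SS G) ℚ))
        (MvPolynomial.rename Subtype.val u) =
      algebraMap _ _ (MvPolynomial.rename Subtype.val u) := by
    intro u
    rw [smul_algebraMap', MvPolynomial.rename_rename, hval]
  rw [← hx, smul_def', map_div₀, ← smul_def', ← smul_def', hp, hq, hfix, hfix]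

theorem faithful [T2Space G] [TotallyDisconnectedSpace G] :
    FaithfulSMul G (FractionRing (MvPolynomial (SS G) ℚ)) := by
  constructor
  intro g₁ g₂ h
  have hS : ∀ t : SS G, g₁ • t = g₂ • t := by
    intro t
    have h1 := h (algebraMap (MvPolynomial (SS G) ℚ) (FractionRing (MvPolynomial (SS G) ℚ)) (MvPolynomial.X t))
    rw [smul_algebraMap', smul_algebraMap', MvPolynomial.rename_X, MvPolynomial.rename_X] at h1
    have h2 := IsFractionRing.injective (MvPolynomial (SS G) ℚ) (FractionRing _) h1
    exact MvPolynomial.X_injective h2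
  have key : ∀ N : OpenNormalSubgroup G, g₁⁻¹ * g₂ ∈ N := by
    intro N
    have h0 := hS ⟨N, ((1 : G) : G ⧸ N.toSubgroup)⟩
    have h2 : (g₁ • (((1:G) : G ⧸ N.toSubgroup))) = g₂ • (((1:G) : G ⧸ N.toSubgroup)) := by
      rw [show (g₁ • (⟨N, ((1 : G) : G ⧸ N.toSubgroup)⟩ : SS G)) =
        ⟨N, g₁ • ((1:G) : G ⧸ N.toSubgroup)⟩ from rfl] at h0
      rw [show (g₂ • (⟨N, ((1 : G) : G ⧸ N.toSubgroup)⟩ : SS G)) =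
        ⟨N, g₂ • ((1:G) : G ⧸ N.toSubgroup)⟩ from rfl] at h0
      exact eq_of_heq (Sigma.ext_iff.mp h0).2
    rw [MulAction.Quotient.smul_mk, MulAction.Quotient.smul_mk, QuotientGroup.eq] at h2
    have h3 : g₁⁻¹ * g₂ ∈ N.toOpenSubgroup := by simpa using h2
    exact h3
  have h1 : g₁⁻¹ * g₂ = 1 := eq_one_of_mem_all G key
  exact (inv_mul_eq_one.mp h1)


end PartE

end Waterhouse


/-- Waterhouse's theorem: every profinite group (compact Hausdorff totally disconnected
topological group) is isomorphic, as a topological group, to the Galois group of some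
Galois (algebraic) field extension `K/k`. -/
theorem profinite_is_galoisGroup (G : Type u) [Group G] [TopologicalSpace G]
    [IsTopologicalGroup G] [CompactSpace G] [T2Space G] [TotallyDisconnectedSpace G] :
    ∃ (k K : Type u) (_ : Field k) (_ : Field K) (_ : Algebra k K),
      IsGalois k K ∧ ∃ e : G ≃* (K ≃ₐ[k] K), Continuous e ∧ Continuous e.symm := by
  classical
  letI := Waterhouse.actF G
  set F := FractionRing (MvPolynomial (Waterhouse.SS G) ℚ) with hF
  have hs := Waterhouse.smooth G
  haveI := Waterhouse.faithful G
  haveI hgal := Waterhouse.isGalois hs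
  refine ⟨↥(FixedPoints.subfield G F), F, inferInstance, inferInstance, inferInstance, hgal, ?_⟩
  have hbij : Function.Bijective (MulSemiringAction.toAlgAut G (FixedPoints.subfield G F) F) := by
    constructor
    · intro g₁ g₂ hgg
      exact eq_of_smul_eq_smul (α := F) fun x => AlgEquiv.ext_iff.mp hgg x
    · exact Waterhouse.toAlgAut_surjective_cpt hs
  let e : G ≃* (F ≃ₐ[FixedPoints.subfield G F] F) := MulEquiv.ofBijective _ hbij
  have hcont : Continuous e := Waterhouse.continuous_toAlgAut hs
  haveI : Algebra.IsIntegral (FixedPoints.subfield G F) F := ⟨Waterhouse.isIntegral hs⟩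
  haveI : T2Space (F ≃ₐ[FixedPoints.subfield G F] F) := krullTopology_t2
  refine ⟨e, hcont, ?_⟩
  have h2 : Continuous ⇑(e.toEquiv.symm) := hcont.continuous_symm_of_equiv_compact_to_t2
  exact h2
end

section
/- Let G be a totally disconnected locally compact group and α a contracting automorphism of G (αⁿ(g) → 1 for all g). Then G is a union of an increasing sequence of compact open subgroups conjugated into each other by α; in particular G is locally elliptic (every finite subset is contained in a compact subgroup). -/
open Filter Topology
open scoped Pointwise

section Aux

variable {G : Type*} [Group G]

/-- Iterated power of a multiplicative equivalence, applying `α` first. -/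
private def pw (α : G ≃* G) : ℕ → G ≃* G
  | 0 => MulEquiv.refl G
  | n + 1 => α.trans (pw α n)

private lemma pw_coe (α : G ≃* G) : ∀ n, ⇑(pw α n) = (⇑α)^[n]
  | 0 => rfl
  | n + 1 => by
      funext g
      show pw α n (α g) = (⇑α)^[n + 1] g
      rw [Function.iterate_succ_apply, pw_coe α n]

private lemma pw_symm_coe (α : G ≃* G) : ∀ n, ⇑(pw α n).symm = (⇑α.symm)^[n]
  | 0 => rfl
  | n + 1 => by
      funext g
      show α.symm ((pw α n).symm g) = (⇑α.symm)^[n + 1] g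
      rw [Function.iterate_succ_apply', pw_symm_coe α n]

private lemma pw_comm (α : G ≃* G) : ∀ (n : ℕ) (g : G), pw α n (α g) = α (pw α n g)
  | 0, g => rfl
  | n + 1, g => by
      show pw α n (α (α g)) = α (pw α n (α g))
      rw [pw_comm α n (α g)]

private lemma preimage_mulEquiv (e : G ≃* G) (S : Set G) : ⇑e ⁻¹' S = ⇑e.symm '' S := by
  ext x
  constructor
  · intro hx
    exact ⟨e x, hx, e.symm_apply_apply x⟩
  · rintro ⟨y, hy, rfl⟩
    simpa using hy

end Aux

/-- Van Dantzig's theorem: a totally disconnected locally compact Hausdorff group has a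
compact open subgroup. -/
private lemma exists_compact_open_subgroup (G : Type*) [Group G] [TopologicalSpace G]
    [IsTopologicalGroup G] [LocallyCompactSpace G] [TotallyDisconnectedSpace G] [T2Space G] :
    ∃ H : Subgroup G, IsCompact (H : Set G) ∧ IsOpen (H : Set G) := by
  obtain ⟨K, hKc, hK1⟩ := exists_compact_mem_nhds (1 : G)
  obtain ⟨W, hWclopen, hW1, hWK⟩ :=
    (loc_compact_Haus_tot_disc_of_zero_dim (H := G)).mem_nhds_iff.1 hK1
  have hWcomp : IsCompact W := hKc.of_isClosed_subset hWclopen.1 hWK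
  obtain ⟨V, hVnhds, hWV⟩ := compact_open_separated_mul_right hWcomp hWclopen.2 subset_rfl
  obtain ⟨V₀, hV₀V, hV₀open, hV₀1⟩ := mem_nhds_iff.mp hVnhds
  set T : Set G := V₀ ∩ V₀⁻¹ with hTdef
  have hTopen : IsOpen T := hV₀open.inter hV₀open.inv
  have hT1 : (1 : G) ∈ T := ⟨hV₀1, by simpa using hV₀1⟩
  have hTinv : T⁻¹ = T := by rw [hTdef, Set.inter_inv, inv_inv, Set.inter_comm]
  have hTV : T ⊆ V := Set.inter_subset_left.trans hV₀V
  have hWT : W * T ⊆ W := (Set.mul_subset_mul_left hTV).trans hWV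
  let S : Subgroup G :=
    { carrier := ⋃ n, T ^ (n + 1)
      mul_mem' := fun {a b} ha hb => by
        rcases Set.mem_iUnion.mp ha with ⟨k, hk⟩
        rcases Set.mem_iUnion.mp hb with ⟨l, hl⟩
        refine Set.mem_iUnion.mpr ⟨k + 1 + l, ?_⟩
        rw [add_assoc, pow_add]
        exact Set.mul_mem_mul hk hl
      one_mem' := Set.mem_iUnion.mpr ⟨0, by rw [zero_add, pow_one]; exact hT1⟩
      inv_mem' := fun {a} ha => by
        rcases Set.mem_iUnion.mp ha with ⟨k, hk⟩
        refine Set.mem_iUnion.mpr ⟨k, ?_⟩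
        rw [← hTinv]
        simpa only [inv_pow, Set.mem_inv, inv_inv] using hk }
  have hSopen : IsOpen (S : Set G) := by
    refine isOpen_iUnion fun n => ?_
    rw [pow_succ]
    exact hTopen.mul_left
  have mulTpow : ∀ n : ℕ, W * T ^ (n + 1) ⊆ W := by
    intro n
    induction n with
    | zero => rw [zero_add, pow_one]; exact hWT
    | succ n ih =>
        rw [pow_succ, ← mul_assoc]
        exact (Set.mul_subset_mul_right ih).trans hWT
  have hSW : (S : Set G) ⊆ W := by
    refine Set.iUnion_subset fun n x hx => mulTpow n ?_
    exact ⟨1, hW1, x, hx, one_mul x⟩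
  exact ⟨S, hWcomp.of_isClosed_subset (S.isClosed_of_isOpen hSopen) hSW, hSopen⟩

/-- A totally disconnected locally compact group admitting a contracting automorphism is
an increasing union of compact open subgroups mapped into each other by the automorphism;
in particular it is locally elliptic: every finite subset is contained in a compact
subgroup. -/
theorem union_compact_open_of_contracting (G : Type*) [Group G] [TopologicalSpace G]
    [IsTopologicalGroup G] [LocallyCompactSpace G] [TotallyDisconnectedSpace G]
    (α : G ≃* G) (hcont : Continuous α) (hcont' : Continuous α.symm)
    (hcontracting : ∀ g : G, Tendsto (fun n => (⇑α)^[n] g) atTop (nhds (1 : G))) :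
    (∃ U : ℕ → Subgroup G,
      (∀ n, IsCompact (U n : Set G)) ∧ (∀ n, IsOpen (U n : Set G)) ∧
      (∀ n, U n ≤ U (n + 1)) ∧ (⋃ n, (U n : Set G)) = Set.univ ∧
      (∀ n, Subgroup.map α.toMonoidHom (U (n + 1)) = U n)) ∧
    ∀ s : Set G, s.Finite → ∃ K : Subgroup G, IsCompact (K : Set G) ∧ s ⊆ K := by
  haveI : T1Space G := ⟨fun x => by
    rw [← totallyDisconnectedSpace_iff_connectedComponent_singleton.mp ‹_› x]
    exact isClosed_connectedComponent⟩
  haveI : T2Space G := inferInstance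
  obtain ⟨H, hHc, hHo⟩ := exists_compact_open_subgroup G
  have contpw : ∀ n, Continuous (pw α n) := fun n => by
    rw [pw_coe]; exact hcont.iterate n
  have contpw' : ∀ n, Continuous (pw α n).symm := fun n => by
    rw [pw_symm_coe]; exact hcont'.iterate n
  -- the closed subgroups whose union is `H`
  set D : ℕ → Subgroup G :=
    fun n => H ⊓ ⨅ m : ℕ, (H.comap (pw α (n + m)).toMonoidHom) with hD
  have memD : ∀ n g, g ∈ D n ↔ g ∈ H ∧ ∀ m, pw α (n + m) g ∈ H := by
    intro n g
    simp [hD, Subgroup.mem_iInf, Subgroup.mem_comap]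
  have hDclosed : ∀ n, IsClosed ((D n : Set G)) := by
    intro n
    have heq : (D n : Set G) =
        (H : Set G) ∩ ⋂ m, (⇑(pw α (n + m))) ⁻¹' (H : Set G) := by
      ext g
      simp [SetLike.mem_coe, memD n g, Set.mem_iInter]
    rw [heq]
    exact hHc.isClosed.inter
      (isClosed_iInter fun m => hHc.isClosed.preimage (contpw _))
  have hDcover : ∀ g ∈ H, ∃ n, g ∈ D n := by
    intro g hg
    have hev : ∀ᶠ k in atTop, (⇑α)^[k] g ∈ (H : Set G) :=
      (hcontracting g).eventually (Filter.eventually_iff.2 (by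
        simpa using hHo.mem_nhds (one_mem H)))
    obtain ⟨n, hn⟩ := eventually_atTop.mp hev
    refine ⟨n, (memD n g).2 ⟨hg, fun m => ?_⟩⟩
    have := hn (n + m) (Nat.le_add_right n m)
    rwa [← pw_coe] at this
  -- Baire category
  have hdense : Dense (⋃ n, interior ((D n : Set G) ∪ (H : Set G)ᶜ)) := by
    refine dense_iUnion_interior_of_closed
      (fun n => (hDclosed n).union (isClosed_compl_iff.mpr hHo)) ?_
    ext x
    simp only [Set.mem_iUnion, Set.mem_union, Set.mem_univ, iff_true, Set.mem_compl_iff,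
      SetLike.mem_coe]
    by_cases hx : x ∈ H
    · obtain ⟨n, hn⟩ := hDcover x hx
      exact ⟨n, Or.inl hn⟩
    · exact ⟨0, Or.inr hx⟩
  obtain ⟨x, hx1, hx2⟩ :=
    hdense.inter_open_nonempty (H : Set G) hHo ⟨1, one_mem H⟩
  obtain ⟨N, hN⟩ := Set.mem_iUnion.mp hx2
  have hDNopen : IsOpen (D N : Set G) := by
    apply Subgroup.isOpen_of_mem_nhds (g := x)
    have hmem : interior ((D N : Set G) ∪ (H : Set G)ᶜ) ∩ (H : Set G) ∈ 𝓝 x :=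
      (isOpen_interior.inter hHo).mem_nhds ⟨hN, hx1⟩
    refine Filter.mem_of_superset hmem ?_
    rintro y ⟨hy1, hy2⟩
    rcases interior_subset hy1 with hy | hy
    · exact hy
    · exact absurd hy2 hy
  set O : Subgroup G := ⨅ m : ℕ, (H.comap (pw α (N + m)).toMonoidHom) with hO
  have memO : ∀ g, g ∈ O ↔ ∀ m, pw α (N + m) g ∈ H := fun g => by
    simp [hO, Subgroup.mem_iInf, Subgroup.mem_comap]
  have hDO : D N ≤ O := inf_le_right
  have hOopen : IsOpen (O : Set G) := by
    apply Subgroup.isOpen_of_mem_nhds (g := (1 : G))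
    exact Filter.mem_of_superset (hDNopen.mem_nhds (one_mem (D N)))
      (SetLike.coe_subset_coe.2 hDO)
  have hOclosed : IsClosed (O : Set G) := O.isClosed_of_isOpen hOopen
  have hOcompact : IsCompact (O : Set G) := by
    have hcs : IsCompact (⇑(pw α N) ⁻¹' (H : Set G)) := by
      rw [preimage_mulEquiv]
      exact hHc.image (contpw' N)
    refine hcs.of_isClosed_subset hOclosed ?_
    intro g hg
    have := (memO g).1 hg 0
    simpa using this
  have hαO : ∀ g ∈ O, α g ∈ O := by
    intro g hg
    rw [memO] at hg ⊢
    intro m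
    show pw α (N + m) (α g) ∈ H
    exact hg (m + 1)
  -- the increasing sequence of compact open subgroups
  set U : ℕ → Subgroup G := fun k => O.comap (pw α k).toMonoidHom with hU
  have memU : ∀ k g, g ∈ U k ↔ pw α k g ∈ O := fun k g => Iff.rfl
  have coeU : ∀ k, (U k : Set G) = ⇑(pw α k) ⁻¹' (O : Set G) := fun k => rfl
  have hUc : ∀ k, IsCompact (U k : Set G) := by
    intro k
    rw [coeU, preimage_mulEquiv]
    exact hOcompact.image (contpw' k)
  have hUo : ∀ k, IsOpen (U k : Set G) := by
    intro k
    rw [coeU]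
    exact hOopen.preimage (contpw k)
  have hUle : ∀ k, U k ≤ U (k + 1) := by
    intro k g hg
    rw [memU] at hg ⊢
    show pw α k (α g) ∈ O
    rw [pw_comm]
    exact hαO _ hg
  have hUcover : (⋃ k, (U k : Set G)) = Set.univ := by
    ext g
    simp only [Set.mem_iUnion, Set.mem_univ, iff_true, SetLike.mem_coe]
    have hev : ∀ᶠ k in atTop, (⇑α)^[k] g ∈ (O : Set G) :=
      (hcontracting g).eventually (Filter.eventually_iff.2 (by
        simpa using hOopen.mem_nhds (one_mem O)))
    obtain ⟨k, hk⟩ := eventually_atTop.mp hev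
    refine ⟨k, ?_⟩
    rw [memU, pw_coe]
    exact hk k le_rfl
  have hUmap : ∀ k, Subgroup.map α.toMonoidHom (U (k + 1)) = U k := by
    intro k
    ext x
    simp only [Subgroup.mem_map, MulEquiv.coe_toMonoidHom]
    constructor
    · rintro ⟨y, hy, rfl⟩
      rw [memU] at hy ⊢
      exact hy
    · intro hx
      refine ⟨α.symm x, ?_, α.apply_symm_apply x⟩
      rw [memU]
      show pw α k (α (α.symm x)) ∈ O
      rw [α.apply_symm_apply]
      exact hx
  have hUmono : Monotone U := monotone_nat_of_le_succ hUle
  refine ⟨⟨U, hUc, hUo, hUle, hUcover, hUmap⟩, ?_⟩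
  intro s hs
  suffices h : ∃ n, s ⊆ (U n : Set G) by
    obtain ⟨n, hn⟩ := h
    exact ⟨U n, hUc n, hn⟩
  refine Set.Finite.induction_on (motive := fun s _ => ∃ n, s ⊆ (U n : Set G)) s hs
    ⟨0, Set.empty_subset _⟩ ?_
  rintro a t _ _ ⟨n, hn⟩
  have ha : ∃ m, a ∈ U m := by
    have : a ∈ ⋃ k, (U k : Set G) := hUcover ▸ Set.mem_univ a
    simpa using this
  obtain ⟨m, hm⟩ := ha
  refine ⟨max n m, Set.insert_subset ?_ (hn.trans ?_)⟩
  · exact hUmono (le_max_right n m) hm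
  · exact SetLike.coe_subset_coe.2 (hUmono (le_max_left n m))
end
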